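/- Let c > 0 and G_c := diag(-1/c², 1, 1, 1). If M is a real 4×4 matrix with M G_c Mᵀ = G_c, M₀₀ ≥ 0 and det M > 0, then there exist V ∈ ℝ³ with |V| < c and Q ∈ SO(3) such that M = L_c(V,Q), where L_c(V,Q) is the standard Lorentz matrix with boost B_c(V) = Id + (γ²/(c²(γ+1))) V Vᵀ and γ = (1-|V|²/c²)^{-1/2}. Conversely every such L_c(V,Q) satisfies these three conditions. -/

import Mathlib

open Matrix

noncomputable def gammaV (c : ℝ) (V : Fin 3 → ℝ) : ℝ :=
  1 / Real.sqrt (1 - (∑ i, V i ^ 2) / c ^ 2)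

noncomputable def Bc (c : ℝ) (V : Fin 3 → ℝ) : Matrix (Fin 3) (Fin 3) ℝ :=
  1 + (gammaV c V ^ 2 / (c ^ 2 * (gammaV c V + 1))) • vecMulVec V V

noncomputable def Lc (c : ℝ) (V : Fin 3 → ℝ) (Q : Matrix (Fin 3) (Fin 3) ℝ) :
    Matrix (Fin 1 ⊕ Fin 3) (Fin 1 ⊕ Fin 3) ℝ :=
  fromBlocks (of fun _ _ => gammaV c V)
             (of fun _ j => (gammaV c V / c ^ 2) * (V ᵥ* Q) j)
             (of fun i _ => gammaV c V * V i)
             (Bc c V * Q)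

noncomputable def Gc (c : ℝ) : Matrix (Fin 1 ⊕ Fin 3) (Fin 1 ⊕ Fin 3) ℝ :=
  fromBlocks (of fun _ _ => -1 / c ^ 2) 0 0 1

noncomputable def Gc' (c : ℝ) : Matrix (Fin 1 ⊕ Fin 3) (Fin 1 ⊕ Fin 3) ℝ :=
  fromBlocks (of fun _ _ => -(c ^ 2)) 0 0 1

lemma entryG (c : ℝ) (N : Matrix (Fin 1 ⊕ Fin 3) (Fin 1 ⊕ Fin 3) ℝ) (a b) :
    (N * Gc c * Nᵀ) a b =
      -(1/c^2) * N a (Sum.inl 0) * N b (Sum.inl 0) + ∑ j, N a (Sum.inr j) * N b (Sum.inr j) := by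
  simp [Gc, mul_apply, Fintype.sum_sum_type, fromBlocks_apply₁₁, fromBlocks_apply₁₂,
    fromBlocks_apply₂₁, fromBlocks_apply₂₂, one_apply, Finset.mul_sum, Finset.sum_mul]
  ring

lemma entryG' (c : ℝ) (N : Matrix (Fin 1 ⊕ Fin 3) (Fin 1 ⊕ Fin 3) ℝ) (a b) :
    (Nᵀ * Gc' c * N) a b =
      -(c^2) * N (Sum.inl 0) a * N (Sum.inl 0) b + ∑ i, N (Sum.inr i) a * N (Sum.inr i) b := by
  simp [Gc', mul_apply, Fintype.sum_sum_type, fromBlocks_apply₁₁, fromBlocks_apply₁₂,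
    fromBlocks_apply₂₁, fromBlocks_apply₂₂, one_apply, Finset.mul_sum, Finset.sum_mul]
  exact Or.inl (mul_comm _ _)

section
variable {c : ℝ} {V : Fin 3 → ℝ}

lemma sumsq_nonneg (V : Fin 3 → ℝ) : 0 ≤ ∑ i, V i ^ 2 :=
  Finset.sum_nonneg fun _ _ => sq_nonneg _

lemma gam_pos (hc : 0 < c) (h : ∑ i, V i ^ 2 < c ^ 2) : 0 < gammaV c V := by
  have h1 : 0 < 1 - (∑ i, V i ^ 2) / c ^ 2 := by
    have : (∑ i, V i ^ 2) / c ^ 2 < 1 := by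
      rw [div_lt_one (by positivity)]; exact h
    linarith
  have := Real.sqrt_pos.mpr h1
  unfold gammaV; positivity

lemma gam_ge_one (hc : 0 < c) (h : ∑ i, V i ^ 2 < c ^ 2) : 1 ≤ gammaV c V := by
  have h1 : 1 - (∑ i, V i ^ 2) / c ^ 2 ≤ 1 := by
    have : 0 ≤ (∑ i, V i ^ 2) / c ^ 2 := by positivity
    linarith
  have h2 : 0 < 1 - (∑ i, V i ^ 2) / c ^ 2 := by
    have : (∑ i, V i ^ 2) / c ^ 2 < 1 := by
      rw [div_lt_one (by positivity)]; exact h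
    linarith
  have hs : Real.sqrt (1 - (∑ i, V i ^ 2) / c ^ 2) ≤ 1 := by
    rw [show (1:ℝ) = Real.sqrt 1 by simp]
    exact Real.sqrt_le_sqrt (by simpa using h1)
  have hsp : 0 < Real.sqrt (1 - (∑ i, V i ^ 2) / c ^ 2) := Real.sqrt_pos.mpr h2
  rw [gammaV, le_div_iff₀ hsp, one_mul]
  simpa using hs

lemma gam_key (hc : 0 < c) (h : ∑ i, V i ^ 2 < c ^ 2) :
    gammaV c V ^ 2 * (∑ i, V i ^ 2) = c ^ 2 * (gammaV c V ^ 2 - 1) := by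
  have h2 : 0 < 1 - (∑ i, V i ^ 2) / c ^ 2 := by
    have : (∑ i, V i ^ 2) / c ^ 2 < 1 := by
      rw [div_lt_one (by positivity)]; exact h
    linarith
  have hsq : gammaV c V ^ 2 = 1 / (1 - (∑ i, V i ^ 2) / c ^ 2) := by
    rw [gammaV, div_pow, one_pow, Real.sq_sqrt h2.le]
  have hne : c ^ 2 - ∑ i, V i ^ 2 ≠ 0 := by nlinarith
  rw [hsq]
  field_simp
  ring
end

noncomputable def Bcinv (c : ℝ) (V : Fin 3 → ℝ) : Matrix (Fin 3) (Fin 3) ℝ :=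
  1 + (-(gammaV c V / (c ^ 2 * (gammaV c V + 1)))) • vecMulVec V V

section
variable {c : ℝ} {V : Fin 3 → ℝ}

lemma P_mul_P : vecMulVec V V * vecMulVec V V = (∑ i, V i ^ 2) • vecMulVec V V := by
  ext i j
  simp [mul_apply, vecMulVec_apply, Fin.sum_univ_three, Matrix.smul_apply]
  ring

lemma vecMul_P : V ᵥ* vecMulVec V V = (∑ i, V i ^ 2) • V := by
  funext j
  simp [vecMul, dotProduct, vecMulVec_apply, Fin.sum_univ_three]
  ring

lemma P_mulVec : vecMulVec V V *ᵥ V = (∑ i, V i ^ 2) • V := by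
  funext j
  simp [mulVec, dotProduct, vecMulVec_apply, Fin.sum_univ_three]
  ring

lemma addP_mul (a b : ℝ) :
    (1 + a • vecMulVec V V) * (1 + b • vecMulVec V V)
      = 1 + (a + b + a * b * (∑ i, V i ^ 2)) • vecMulVec V V := by
  simp only [add_mul, mul_add, one_mul, mul_one, smul_mul_assoc, mul_smul_comm, smul_smul,
    P_mul_P]
  module
end

section
variable {c : ℝ} {V : Fin 3 → ℝ}

lemma vecMul_smulM (v : Fin 3 → ℝ) (a : ℝ) (A : Matrix (Fin 3) (Fin 3) ℝ) :
    v ᵥ* (a • A) = a • (v ᵥ* A) := by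
  funext j
  simp [vecMul, dotProduct, Finset.mul_sum, mul_left_comm]

lemma smulM_mulVec (v : Fin 3 → ℝ) (a : ℝ) (A : Matrix (Fin 3) (Fin 3) ℝ) :
    (a • A) *ᵥ v = a • (A *ᵥ v) := by
  funext j
  simp [mulVec, dotProduct, Finset.mul_sum, mul_assoc]

lemma gam_n (hc : 0 < c) (h : ∑ i, V i ^ 2 < c ^ 2) :
    (∑ i, V i ^ 2) = c ^ 2 * (gammaV c V ^ 2 - 1) / gammaV c V ^ 2 := by
  have h0 : gammaV c V ≠ 0 := ne_of_gt (gam_pos hc h)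
  rw [eq_div_iff (pow_ne_zero _ h0)]
  linear_combination gam_key hc h

lemma Bc_mul_Bcinv (hc : 0 < c) (h : ∑ i, V i ^ 2 < c ^ 2) :
    Bc c V * Bcinv c V = 1 := by
  have hγ1 : 1 ≤ gammaV c V := gam_ge_one hc h
  rw [Bc, Bcinv, addP_mul, gam_n hc h]
  have h1 : gammaV c V + 1 ≠ 0 := by linarith
  have h0 : gammaV c V ≠ 0 := by linarith
  have h2 : c ≠ 0 := ne_of_gt hc
  have : gammaV c V ^ 2 / (c ^ 2 * (gammaV c V + 1)) + -(gammaV c V / (c ^ 2 * (gammaV c V + 1)))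
      + gammaV c V ^ 2 / (c ^ 2 * (gammaV c V + 1)) * -(gammaV c V / (c ^ 2 * (gammaV c V + 1)))
        * (c ^ 2 * (gammaV c V ^ 2 - 1) / gammaV c V ^ 2) = 0 := by
    field_simp
    ring
  rw [this, zero_smul, add_zero]

lemma Bcinv_mul_Bc (hc : 0 < c) (h : ∑ i, V i ^ 2 < c ^ 2) :
    Bcinv c V * Bc c V = 1 := by
  rw [mul_eq_one_comm]; exact Bc_mul_Bcinv hc h

lemma Bc_mul_Bc (hc : 0 < c) (h : ∑ i, V i ^ 2 < c ^ 2) :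
    Bc c V * Bc c V = 1 + (gammaV c V ^ 2 / c ^ 2) • vecMulVec V V := by
  have hγ1 : 1 ≤ gammaV c V := gam_ge_one hc h
  rw [Bc, addP_mul, gam_n hc h]
  have h1 : gammaV c V + 1 ≠ 0 := by linarith
  have h0 : gammaV c V ≠ 0 := by linarith
  have h2 : c ≠ 0 := ne_of_gt hc
  have : gammaV c V ^ 2 / (c ^ 2 * (gammaV c V + 1)) + gammaV c V ^ 2 / (c ^ 2 * (gammaV c V + 1))
      + gammaV c V ^ 2 / (c ^ 2 * (gammaV c V + 1)) * (gammaV c V ^ 2 / (c ^ 2 * (gammaV c V + 1)))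
        * (c ^ 2 * (gammaV c V ^ 2 - 1) / gammaV c V ^ 2) = gammaV c V ^ 2 / c ^ 2 := by
    field_simp
    ring
  rw [this]

lemma vecMul_Bc (hc : 0 < c) (h : ∑ i, V i ^ 2 < c ^ 2) :
    V ᵥ* Bc c V = gammaV c V • V := by
  have hγ1 : 1 ≤ gammaV c V := gam_ge_one hc h
  rw [Bc, Matrix.vecMul_add, Matrix.vecMul_one, vecMul_smulM, vecMul_P, gam_n hc h, smul_smul]
  have h1 : gammaV c V + 1 ≠ 0 := by linarith
  have h0 : gammaV c V ≠ 0 := by linarith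
  have h2 : c ≠ 0 := ne_of_gt hc
  have : gammaV c V ^ 2 / (c ^ 2 * (gammaV c V + 1))
      * (c ^ 2 * (gammaV c V ^ 2 - 1) / gammaV c V ^ 2) = gammaV c V - 1 := by
    field_simp
    ring
  rw [this]
  funext j; simp; ring

lemma Bc_mulVec (hc : 0 < c) (h : ∑ i, V i ^ 2 < c ^ 2) :
    Bc c V *ᵥ V = gammaV c V • V := by
  have hγ1 : 1 ≤ gammaV c V := gam_ge_one hc h
  rw [Bc, Matrix.add_mulVec, Matrix.one_mulVec, smulM_mulVec, P_mulVec, gam_n hc h, smul_smul]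
  have h1 : gammaV c V + 1 ≠ 0 := by linarith
  have h0 : gammaV c V ≠ 0 := by linarith
  have h2 : c ≠ 0 := ne_of_gt hc
  have : gammaV c V ^ 2 / (c ^ 2 * (gammaV c V + 1))
      * (c ^ 2 * (gammaV c V ^ 2 - 1) / gammaV c V ^ 2) = gammaV c V - 1 := by
    field_simp
    ring
  rw [this]
  funext j; simp; ring

lemma vecMul_Bcinv (hc : 0 < c) (h : ∑ i, V i ^ 2 < c ^ 2) :
    V ᵥ* Bcinv c V = (gammaV c V)⁻¹ • V := by
  have hγ1 : 1 ≤ gammaV c V := gam_ge_one hc h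
  rw [Bcinv, Matrix.vecMul_add, Matrix.vecMul_one, vecMul_smulM, vecMul_P, gam_n hc h, smul_smul]
  have h1 : gammaV c V + 1 ≠ 0 := by linarith
  have h0 : gammaV c V ≠ 0 := by linarith
  have h2 : c ≠ 0 := ne_of_gt hc
  have : -(gammaV c V / (c ^ 2 * (gammaV c V + 1)))
      * (c ^ 2 * (gammaV c V ^ 2 - 1) / gammaV c V ^ 2) = (gammaV c V)⁻¹ - 1 := by
    field_simp
    ring
  rw [this]
  funext j; simp; ring

lemma P_transpose : (vecMulVec V V)ᵀ = vecMulVec V V := by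
  ext i j; simp [vecMulVec_apply, mul_comm]

lemma Bc_transpose : (Bc c V)ᵀ = Bc c V := by
  rw [Bc, transpose_add, transpose_one, transpose_smul, P_transpose]

lemma Bcinv_transpose : (Bcinv c V)ᵀ = Bcinv c V := by
  rw [Bcinv, transpose_add, transpose_one, transpose_smul, P_transpose]

lemma det_Bcinv (hc : 0 < c) (h : ∑ i, V i ^ 2 < c ^ 2) :
    (Bcinv c V).det = (gammaV c V)⁻¹ := by
  have hγ1 : 1 ≤ gammaV c V := gam_ge_one hc h
  have h1 : gammaV c V + 1 ≠ 0 := by linarith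
  have h0 : gammaV c V ≠ 0 := by linarith
  have h2 : c ≠ 0 := ne_of_gt hc
  have key : 1 + (-(gammaV c V / (c ^ 2 * (gammaV c V + 1)))) * (∑ i, V i ^ 2)
      = (gammaV c V)⁻¹ := by
    rw [gam_n hc h]
    field_simp
    ring
  have hP : (-(gammaV c V / (c ^ 2 * (gammaV c V + 1)))) • vecMulVec V V
      = replicateCol (Fin 1) ((-(gammaV c V / (c ^ 2 * (gammaV c V + 1)))) • V) * replicateRow (Fin 1) V := by
    ext i j
    simp [vecMulVec_apply, mul_apply]
    ring
  rw [Bcinv, hP, det_one_add_mul_comm, det_fin_one]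
  rw [Fin.sum_univ_three] at key
  simp [Matrix.add_apply, Matrix.one_apply, mul_apply, replicateRow, replicateCol, Fin.sum_univ_three, sq] at key ⊢
  linarith [key]

end

section
variable {c : ℝ} {V : Fin 3 → ℝ}

lemma det_Lc (hc : 0 < c) (h : ∑ i, V i ^ 2 < c ^ 2) (Q : Matrix (Fin 3) (Fin 3) ℝ) :
    (Lc c V Q).det = Q.det := by
  have hγ1 : 1 ≤ gammaV c V := gam_ge_one hc h
  have h0 : gammaV c V ≠ 0 := by linarith
  haveI : Invertible (of fun _ _ => gammaV c V : Matrix (Fin 1) (Fin 1) ℝ) :=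
    ⟨of fun _ _ => (gammaV c V)⁻¹,
     by ext i j; simp [mul_apply, inv_mul_cancel₀ h0, Matrix.one_apply, Fin.fin_one_eq_zero],
     by ext i j; simp [mul_apply, mul_inv_cancel₀ h0, Matrix.one_apply, Fin.fin_one_eq_zero]⟩
  rw [Lc, det_fromBlocks₁₁]
  have hC : (of fun i _ => gammaV c V * V i : Matrix (Fin 3) (Fin 1) ℝ)
        * (⅟(of fun _ _ => gammaV c V : Matrix (Fin 1) (Fin 1) ℝ))
        * (of fun _ j => (gammaV c V / c ^ 2) * (V ᵥ* Q) j : Matrix (Fin 1) (Fin 3) ℝ)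
      = (gammaV c V / c ^ 2) • (vecMulVec V V * Q) := by
    have hInv : (⅟(of fun _ _ => gammaV c V : Matrix (Fin 1) (Fin 1) ℝ))
        = (of fun _ _ => (gammaV c V)⁻¹ : Matrix (Fin 1) (Fin 1) ℝ) :=
      invOf_eq_right_inv (by
        ext i j
        simp [mul_apply, mul_inv_cancel₀ h0, Matrix.one_apply, Fin.fin_one_eq_zero])
    rw [hInv]
    ext i j
    simp only [mul_apply, Fin.sum_univ_one, of_apply, Matrix.smul_apply, vecMulVec_apply,
      smul_eq_mul, vecMul, dotProduct, Finset.mul_sum, Finset.sum_mul]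
    refine Finset.sum_congr rfl fun x _ => ?_
    field_simp
  rw [hC]
  have hB : Bc c V * Q - (gammaV c V / c ^ 2) • (vecMulVec V V * Q) = Bcinv c V * Q := by
    rw [← smul_mul_assoc, ← Matrix.sub_mul]
    congr 1
    rw [Bc, Bcinv, add_sub_assoc, ← sub_smul]
    congr 1
    have h1 : gammaV c V + 1 ≠ 0 := by linarith
    have h2 : c ≠ 0 := ne_of_gt hc
    congr 1
    field_simp
    ring
  rw [hB, det_mul, det_Bcinv hc h, det_fin_one]
  simp [inv_mul_cancel_left₀ h0]
  rw [← mul_assoc, mul_inv_cancel₀ h0, one_mul]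

lemma Lc_entry_TL (Q : Matrix (Fin 3) (Fin 3) ℝ) (i j : Fin 1) :
    Lc c V Q (Sum.inl i) (Sum.inl j) = gammaV c V := rfl

lemma Lc_mem (hc : 0 < c) (h : ∑ i, V i ^ 2 < c ^ 2) (Q : Matrix (Fin 3) (Fin 3) ℝ)
    (hQ : Qᵀ * Q = 1) :
    Lc c V Q * Gc c * (Lc c V Q)ᵀ = Gc c := by
  have hγ1 : 1 ≤ gammaV c V := gam_ge_one hc h
  have h0 : gammaV c V ≠ 0 := by linarith
  have hQQt : Q * Qᵀ = 1 := mul_eq_one_comm.mp hQ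
  have hdot : (V ᵥ* Q) ⬝ᵥ (V ᵥ* Q) = ∑ i, V i ^ 2 := by
    calc (V ᵥ* Q) ⬝ᵥ (V ᵥ* Q) = (V ᵥ* Q) ⬝ᵥ (Qᵀ *ᵥ V) := by rw [mulVec_transpose]
      _ = ((V ᵥ* Q) ᵥ* Qᵀ) ⬝ᵥ V := (dotProduct_mulVec _ _ _)
      _ = (V ᵥ* (Q * Qᵀ)) ⬝ᵥ V := by rw [vecMul_vecMul]
      _ = V ⬝ᵥ V := by rw [hQQt, vecMul_one]
      _ = ∑ i, V i ^ 2 := by simp [dotProduct, sq]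
  have h5 : (Bc c V * Q) *ᵥ (V ᵥ* Q) = gammaV c V • V := by
    rw [mulVec_vecMul, Matrix.mul_assoc, hQQt, Matrix.mul_one, Bc_mulVec hc h]
  have h6 : (Bc c V * Q) * (Bc c V * Q)ᵀ = 1 + (gammaV c V ^ 2 / c ^ 2) • vecMulVec V V := by
    rw [transpose_mul, Matrix.mul_assoc, ← Matrix.mul_assoc Q Qᵀ _, hQQt, Matrix.one_mul,
      Bc_transpose, Bc_mul_Bc hc h]
  ext a b
  rw [entryG]
  cases a with
  | inl i =>
    cases b with
    | inl j =>
      simp only [Lc, fromBlocks_apply₁₁, fromBlocks_apply₁₂, of_apply, Gc]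
      have hd := hdot
      simp only [dotProduct] at hd
      have hexp : ∑ j : Fin 3, (gammaV c V / c ^ 2 * (V ᵥ* Q) j) * (gammaV c V / c ^ 2 * (V ᵥ* Q) j)
          = (gammaV c V / c ^ 2)^2 * ∑ i, V i ^ 2 := by
        rw [← hd, Finset.mul_sum]; apply Finset.sum_congr rfl; intros; ring
      rw [hexp, gam_n hc h]
      have h2 : c ≠ 0 := ne_of_gt hc
      field_simp
      ring
    | inr j =>
      simp only [Lc, fromBlocks_apply₁₁, fromBlocks_apply₁₂, fromBlocks_apply₂₁,
        fromBlocks_apply₂₂, of_apply, Gc, Matrix.zero_apply]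
      have h5j := congrFun h5 j
      simp only [mulVec, dotProduct, Pi.smul_apply, smul_eq_mul] at h5j
      have hexp : ∑ k : Fin 3, (gammaV c V / c ^ 2 * (V ᵥ* Q) k) * (Bc c V * Q) j k
          = (gammaV c V / c ^ 2) * (gammaV c V * V j) := by
        rw [← h5j, Finset.mul_sum]; apply Finset.sum_congr rfl; intros; ring
      rw [hexp]
      have h2 : c ≠ 0 := ne_of_gt hc
      field_simp
      ring
  | inr i =>
    cases b with
    | inl j =>
      simp only [Lc, fromBlocks_apply₁₁, fromBlocks_apply₁₂, fromBlocks_apply₂₁,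
        fromBlocks_apply₂₂, of_apply, Gc, Matrix.zero_apply]
      have h5i := congrFun h5 i
      simp only [mulVec, dotProduct, Pi.smul_apply, smul_eq_mul] at h5i
      have hexp : ∑ k : Fin 3, (Bc c V * Q) i k * (gammaV c V / c ^ 2 * (V ᵥ* Q) k)
          = (gammaV c V / c ^ 2) * (gammaV c V * V i) := by
        rw [← h5i, Finset.mul_sum]; apply Finset.sum_congr rfl; intros; ring
      rw [hexp]
      have h2 : c ≠ 0 := ne_of_gt hc
      field_simp
      ring
    | inr j =>
      simp only [Lc, fromBlocks_apply₂₁, fromBlocks_apply₂₂, of_apply, Gc]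
      have hexp : ∑ x : Fin 3, (Bc c V * Q) i x * (Bc c V * Q) j x
          = (Bc c V * Q * (Bc c V * Q)ᵀ) i j := by
        simp only [mul_apply, transpose_apply]
      rw [hexp, h6]
      simp only [Matrix.add_apply, Matrix.smul_apply, vecMulVec_apply, smul_eq_mul,
        Matrix.one_apply]
      split_ifs <;> ring
end

lemma GcGc' {c : ℝ} (hc : 0 < c) : Gc c * Gc' c = 1 := by
  have h2 : c ≠ 0 := ne_of_gt hc
  ext a b
  cases a <;> cases b <;>
    simp [Gc, Gc', mul_apply, Fintype.sum_sum_type, fromBlocks_apply₁₁, fromBlocks_apply₁₂,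
      fromBlocks_apply₂₁, fromBlocks_apply₂₂, one_apply, Fin.fin_one_eq_zero] <;>
    field_simp

lemma Gc'Gc {c : ℝ} (hc : 0 < c) : Gc' c * Gc c = 1 := by
  rw [mul_eq_one_comm]; exact GcGc' hc

theorem stmt6 (c : ℝ) (hc : 0 < c)
    (M : Matrix (Fin 1 ⊕ Fin 3) (Fin 1 ⊕ Fin 3) ℝ) :
    (M * Gc c * Mᵀ = Gc c ∧ 0 ≤ M (Sum.inl 0) (Sum.inl 0) ∧ 0 < M.det)
    ↔ ∃ (V : Fin 3 → ℝ) (Q : Matrix (Fin 3) (Fin 3) ℝ),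
        Real.sqrt (∑ i, V i ^ 2) < c ∧ Qᵀ * Q = 1 ∧ Q.det = 1 ∧
        M = Lc c V Q := by
  constructor
  · rintro ⟨hM, hM00, hdetM⟩
    set γ₀ := M (Sum.inl 0) (Sum.inl 0) with hγ₀def
    -- derive the second matrix relation
    have h1 : M * Gc c * Mᵀ * Gc' c = 1 := by rw [hM, GcGc' hc]
    have h1' : M * (Gc c * Mᵀ * Gc' c) = 1 := by
      rw [← h1]; simp [Matrix.mul_assoc]
    have h2 : Gc c * Mᵀ * Gc' c * M = 1 := mul_eq_one_comm.mp h1'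
    have hM' : Mᵀ * Gc' c * M = Gc' c := by
      have h3 : Gc' c * (Gc c * Mᵀ * Gc' c * M) = Gc' c := by rw [h2, Matrix.mul_one]
      calc Mᵀ * Gc' c * M = (Gc' c * Gc c) * (Mᵀ * Gc' c * M) := by
            rw [Gc'Gc hc, Matrix.one_mul]
        _ = Gc' c * (Gc c * Mᵀ * Gc' c * M) := by simp [Matrix.mul_assoc]
        _ = Gc' c := h3
    -- scalar equations
    have e1 : -(c^2) * γ₀ * γ₀
        + ∑ i, M (Sum.inr i) (Sum.inl 0) * M (Sum.inr i) (Sum.inl 0) = -(c^2) := by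
      have := congrFun (congrFun hM' (Sum.inl 0)) (Sum.inl 0)
      rw [entryG'] at this
      simpa [Gc'] using this
    have hsumw : 0 ≤ ∑ i, M (Sum.inr i) (Sum.inl 0) * M (Sum.inr i) (Sum.inl 0) :=
      Finset.sum_nonneg fun i _ => mul_self_nonneg _
    have hsq1 : 1 ≤ γ₀^2 := by nlinarith [mul_pos hc hc, hsumw, e1]
    have hγ₀1 : 1 ≤ γ₀ := by nlinarith [hsq1, hM00]
    have hγ₀0 : γ₀ ≠ 0 := by linarith
    set V : Fin 3 → ℝ := fun i => γ₀⁻¹ * M (Sum.inr i) (Sum.inl 0) with hVdef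
    have hnsum : ∑ i, V i ^ 2 = c^2 - c^2/γ₀^2 := by
      have hsw : ∑ i, M (Sum.inr i) (Sum.inl 0) * M (Sum.inr i) (Sum.inl 0)
          = c^2*γ₀^2 - c^2 := by nlinarith [e1]
      calc ∑ i, V i ^ 2
          = γ₀⁻¹^2 * ∑ i, M (Sum.inr i) (Sum.inl 0) * M (Sum.inr i) (Sum.inl 0) := by
            rw [Finset.mul_sum]
            refine Finset.sum_congr rfl fun x _ => ?_
            simp [hVdef]; ring
        _ = c^2 - c^2/γ₀^2 := by rw [hsw]; field_simp
    have hn : ∑ i, V i ^ 2 < c ^ 2 := by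
      rw [hnsum]
      have : 0 < c^2/γ₀^2 := by positivity
      linarith
    have hgV : gammaV c V = γ₀ := by
      rw [gammaV, hnsum]
      have hq : 1 - (c^2 - c^2/γ₀^2)/c^2 = (γ₀⁻¹)^2 := by
        have h2 : c ≠ 0 := ne_of_gt hc
        field_simp
        ring
      rw [hq, Real.sqrt_sq (by positivity), one_div, inv_inv]
    have hw : ∀ i, M (Sum.inr i) (Sum.inl 0) = γ₀ * V i := by
      intro i
      simp only [hVdef]
      rw [← mul_assoc, mul_inv_cancel₀ hγ₀0, one_mul]
    set A : Matrix (Fin 3) (Fin 3) ℝ := of fun i j => M (Sum.inr i) (Sum.inr j) with hAdef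
    have hE3 : A * Aᵀ = 1 + (γ₀^2/c^2) • vecMulVec V V := by
      ext i j
      have e3 := congrFun (congrFun hM (Sum.inr i)) (Sum.inr j)
      rw [entryG] at e3
      simp only [Gc, fromBlocks_apply₂₂] at e3
      rw [hw i, hw j] at e3
      simp only [mul_apply, transpose_apply, Matrix.add_apply, Matrix.smul_apply,
        vecMulVec_apply, smul_eq_mul, hAdef, of_apply]
      linear_combination e3
    set Q : Matrix (Fin 3) (Fin 3) ℝ := Bcinv c V * A with hQdef
    have hBcA : Bc c V * Q = A := by
      rw [hQdef, ← Matrix.mul_assoc, Bc_mul_Bcinv hc hn, Matrix.one_mul]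
    have hQQt : Q * Qᵀ = 1 := by
      have hQt : Qᵀ = Aᵀ * Bcinv c V := by rw [hQdef, transpose_mul, Bcinv_transpose]
      calc Q * Qᵀ = Bcinv c V * (A * Aᵀ) * Bcinv c V := by
            rw [hQdef, hQt]; simp [Matrix.mul_assoc]
        _ = Bcinv c V * (Bc c V * Bc c V) * Bcinv c V := by
            have hBB : (1 : Matrix (Fin 3) (Fin 3) ℝ) + (γ₀^2/c^2) • vecMulVec V V
                = Bc c V * Bc c V := by rw [Bc_mul_Bc hc hn, hgV]
            rw [hE3, hBB]
        _ = 1 := by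
            rw [show Bcinv c V * (Bc c V * Bc c V) * Bcinv c V
                = (Bcinv c V * Bc c V) * (Bc c V * Bcinv c V) by simp [Matrix.mul_assoc],
              Bcinv_mul_Bc hc hn, Bc_mul_Bcinv hc hn, Matrix.one_mul]
    have hQ : Qᵀ * Q = 1 := mul_eq_one_comm.mp hQQt
    have hVQ : V ᵥ* Q = γ₀⁻¹ • (V ᵥ* A) := by
      rw [hQdef, ← vecMul_vecMul, vecMul_Bcinv hc hn, hgV, smul_vecMul]
    have hMeq : M = Lc c V Q := by
      ext a b
      cases a with
      | inl i =>
        cases b with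
        | inl j =>
          fin_cases i; fin_cases j
          simp [Lc, fromBlocks_apply₁₁, hgV]
          rfl
        | inr j =>
          fin_cases i
          have e2 : -(c^2) * γ₀ * M (Sum.inl 0) (Sum.inr j)
              + ∑ i, M (Sum.inr i) (Sum.inl 0) * M (Sum.inr i) (Sum.inr j) = 0 := by
            have := congrFun (congrFun hM' (Sum.inl 0)) (Sum.inr j)
            rw [entryG'] at this
            simpa [Gc'] using this
          have hsum : ∑ i, V i * A i j = γ₀⁻¹ * (c^2 * γ₀ * M (Sum.inl 0) (Sum.inr j)) := by
            have hs2 : ∑ i, M (Sum.inr i) (Sum.inl 0) * M (Sum.inr i) (Sum.inr j)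
                = c^2 * γ₀ * M (Sum.inl 0) (Sum.inr j) := by linarith
            calc ∑ i, V i * A i j
                = γ₀⁻¹ * ∑ i, M (Sum.inr i) (Sum.inl 0) * M (Sum.inr i) (Sum.inr j) := by
                  rw [Finset.mul_sum]
                  refine Finset.sum_congr rfl fun x _ => ?_
                  simp [hVdef, hAdef]; ring
              _ = γ₀⁻¹ * (c^2 * γ₀ * M (Sum.inl 0) (Sum.inr j)) := by rw [hs2]
          show M (Sum.inl 0) (Sum.inr j) = Lc c V Q (Sum.inl 0) (Sum.inr j)
          simp only [Lc, fromBlocks_apply₁₂, of_apply, hgV, hVQ, Pi.smul_apply, smul_eq_mul]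
          rw [show (V ᵥ* A) j = ∑ i, V i * A i j from rfl, hsum]
          have h2 : c ≠ 0 := ne_of_gt hc
          field_simp
      | inr i =>
        cases b with
        | inl j =>
          fin_cases j
          show M (Sum.inr i) (Sum.inl 0) = Lc c V Q (Sum.inr i) (Sum.inl 0)
          simp only [Lc, fromBlocks_apply₂₁, of_apply, hgV, hVdef]
          field_simp
          have e : (fun i => M (Sum.inr i) (Sum.inl 0) / γ₀) = V := by
            funext k; simp [hVdef, div_eq_inv_mul]
          rw [e, hgV]
        | inr j =>
          show M (Sum.inr i) (Sum.inr j) = Lc c V Q (Sum.inr i) (Sum.inr j)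
          simp only [Lc, fromBlocks_apply₂₂, hBcA, hAdef, of_apply]
    have hdQ : Q.det = 1 := by
      have hd : M.det = Q.det := by rw [hMeq, det_Lc hc hn]
      have hsq : Q.det * Q.det = 1 := by
        have := congrArg Matrix.det hQ
        rwa [det_mul, det_transpose, det_one] at this
      nlinarith [hd ▸ hdetM]
    exact ⟨V, Q, (Real.sqrt_lt' hc).mpr hn, hQ, hdQ, hMeq⟩
  · rintro ⟨V, Q, hVc, hQ, hdetQ, rfl⟩
    have hn : ∑ i, V i ^ 2 < c ^ 2 := (Real.sqrt_lt' hc).mp hVc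
    refine ⟨Lc_mem hc hn Q hQ, ?_, ?_⟩
    · show 0 ≤ gammaV c V
      exact (gam_pos hc hn).le
    · rw [det_Lc hc hn, hdetQ]
      exact one_pos
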